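/- arXiv:1205.1477 — 2 statements merged into one kernel-verified Lean document; each statement's English description precedes it below -/
import Mathlib

section
/- Let N be a matroid on a finite ground set E with rank function r, let z : E → ℝ be a point of the matroid polytope P(N), and let G be an independent set of N such that for every e ∈ G there exists a set S ⊆ E with e ∈ S and ∑_{a∈S} z_a ≥ r(S) − 1/2. Then ∑_{e∈E} z_e ≥ |G|/2. -/
open scoped BigOperators Classical

/-- The rank function of a matroid: `mrank M S` is the maximum cardinality of an
independent subset of `S`. -/
noncomputable def mrank {α : Type*} (M : Matroid α) (S : Set α) : ℕ :=
  sSup {n : ℕ | ∃ I : Finset α, ↑I ⊆ S ∧ M.Indep ↑I ∧ I.card = n}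

section aux

variable {α : Type*} [Fintype α] {N : Matroid α}

lemma mrank_bddAbove (S : Set α) :
    BddAbove {n : ℕ | ∃ I : Finset α, ↑I ⊆ S ∧ N.Indep ↑I ∧ I.card = n} := by
  refine ⟨Fintype.card α, ?_⟩
  rintro n ⟨I, -, -, rfl⟩
  exact I.card_le_univ.trans_eq (Finset.card_univ)

lemma card_le_mrank {I : Finset α} {S : Set α} (hIS : ↑I ⊆ S) (hI : N.Indep ↑I) :
    I.card ≤ mrank N S :=
  le_csSup (mrank_bddAbove S) ⟨I, hIS, hI, rfl⟩

lemma ncard_le_mrank {J S : Set α} (hJS : J ⊆ S) (hJ : N.Indep J) :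
    J.ncard ≤ mrank N S := by
  have hfin : J.Finite := Set.toFinite J
  have h := card_le_mrank (I := hfin.toFinset) (S := S)
    (by simpa [Set.Finite.coe_toFinset] using hJS)
    (by simpa [Set.Finite.coe_toFinset] using hJ)
  simpa [Set.ncard_eq_toFinset_card'] using h

lemma mrank_eq_of_basis {J S : Set α} (hJ : N.IsBasis J S) : mrank N S = J.ncard := by
  refine le_antisymm ?_ (ncard_le_mrank hJ.subset hJ.indep)
  refine csSup_le ⟨0, ∅, by simp, by simpa using N.empty_indep, by simp⟩ ?_
  rintro n ⟨K, hKS, hK, rfl⟩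
  obtain ⟨K', hK', hKK'⟩ := hK.subset_isBasis'_of_subset hKS
  have hcard : K'.encard = J.encard := hK'.encard_eq_encard hJ.isBasis'
  have hK'fin : K'.Finite := Set.toFinite K'
  have h1 : (K : Set α).ncard ≤ K'.ncard := Set.ncard_le_ncard hKK' hK'fin
  have h2 : K'.ncard = J.ncard := by rw [Set.ncard_def, Set.ncard_def, hcard]
  have h3 : (K : Set α).ncard = K.card := by simp [Set.ncard_coe_finset]
  omega

lemma mrank_submod (hE : N.E = Set.univ) (S T : Finset α) :
    mrank N ↑(S ∪ T) + mrank N ↑(S ∩ T) ≤ mrank N ↑S + mrank N ↑T := by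
  obtain ⟨I, hI⟩ := N.exists_isBasis ↑(S ∩ T) (by rw [hE]; exact Set.subset_univ _)
  have hIsub' : I ⊆ (↑(S ∪ T) : Set α) := hI.subset.trans (by
    rw [Finset.coe_inter, Finset.coe_union]
    exact Set.inter_subset_left.trans Set.subset_union_left)
  obtain ⟨J, hJ, hIJ⟩ := hI.indep.subset_isBasis_of_subset hIsub'
    (by rw [hE]; exact Set.subset_univ _)
  rw [mrank_eq_of_basis hJ, mrank_eq_of_basis hI]
  have hJS : (J ∩ ↑S).ncard ≤ mrank N ↑S :=
    ncard_le_mrank Set.inter_subset_right (hJ.indep.inter_right _)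
  have hJT : (J ∩ ↑T).ncard ≤ mrank N ↑T :=
    ncard_le_mrank Set.inter_subset_right (hJ.indep.inter_right _)
  have hunion : (J ∩ ↑S) ∪ (J ∩ ↑T) = J := by
    rw [← Set.inter_union_distrib_left]
    refine Set.inter_eq_left.2 ?_
    simpa [Finset.coe_union] using hJ.subset
  have hIsub : I ⊆ (J ∩ ↑S) ∩ (J ∩ ↑T) := by
    intro x hx
    have hxJ : x ∈ J := hIJ hx
    have hxST : x ∈ (↑(S ∩ T) : Set α) := hI.subset hx
    simp only [Finset.coe_inter, Set.mem_inter_iff] at hxST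
    exact ⟨⟨hxJ, hxST.1⟩, hxJ, hxST.2⟩
  have hie := Set.ncard_union_add_ncard_inter (J ∩ ↑S) (J ∩ ↑T)
    (Set.toFinite _) (Set.toFinite _)
  rw [hunion] at hie
  have hIcard : I.ncard ≤ ((J ∩ ↑S) ∩ (J ∩ ↑T)).ncard :=
    Set.ncard_le_ncard hIsub (Set.toFinite _)
  omega

lemma mrank_empty (N : Matroid α) : mrank N (∅ : Set α) = 0 := by
  refine Nat.le_zero.1 (csSup_le ⟨0, ∅, by simp, by simpa using N.empty_indep, by simp⟩ ?_)
  rintro n ⟨K, hKS, -, rfl⟩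
  have : K = ∅ := by
    ext x; simpa using fun hx => hKS hx
  simp [this]

end aux

theorem nearly_tight_cover_large_size
    {α : Type*} [Fintype α] (N : Matroid α) (hE : N.E = Set.univ)
    (z : α → ℝ) (hz0 : ∀ e, 0 ≤ z e)
    (hzP : ∀ S : Finset α, ∑ e ∈ S, z e ≤ (mrank N ↑S : ℝ))
    (G : Finset α) (hG : N.Indep ↑G)
    (hcov : ∀ e ∈ G, ∃ S : Finset α, e ∈ S ∧
      (mrank N ↑S : ℝ) - 1 / 2 ≤ ∑ a ∈ S, z a) :
    (G.card : ℝ) / 2 ≤ ∑ e : α, z e := by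
  -- key induction: for any F ⊆ G there is U ⊇ F with mrank U ≤ z(U) + |F|/2
  have key : ∀ F : Finset α, F ⊆ G → ∃ U : Finset α, F ⊆ U ∧
      (mrank N ↑U : ℝ) ≤ ∑ a ∈ U, z a + (F.card : ℝ) / 2 := by
    intro F
    induction F using Finset.induction_on with
    | empty =>
      intro _
      exact ⟨∅, Finset.Subset.refl _, by simp [mrank_empty]⟩
    | insert _ _ he ih =>
      rename_i e F
      intro hsub
      obtain ⟨U, hFU, hU⟩ := ih (fun x hx => hsub (Finset.mem_insert_of_mem hx))
      obtain ⟨S, heS, hS⟩ := hcov e (hsub (Finset.mem_insert_self e F))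
      refine ⟨U ∪ S, ?_, ?_⟩
      · intro x hx
        rcases Finset.mem_insert.1 hx with rfl | hx
        · exact Finset.mem_union_right _ heS
        · exact Finset.mem_union_left _ (hFU hx)
      · have hsubmod := mrank_submod hE U S
        have hzint : ∑ a ∈ U ∩ S, z a ≤ (mrank N ↑(U ∩ S) : ℝ) := hzP (U ∩ S)
        have hsum : ∑ a ∈ U ∪ S, z a + ∑ a ∈ U ∩ S, z a
            = ∑ a ∈ U, z a + ∑ a ∈ S, z a := Finset.sum_union_inter
        have hcard : ((insert e F).card : ℝ) = F.card + 1 := by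
          rw [Finset.card_insert_of_notMem he]; push_cast; ring
        have hsubmodR : (mrank N ↑(U ∪ S) : ℝ) + (mrank N ↑(U ∩ S) : ℝ)
            ≤ (mrank N ↑U : ℝ) + (mrank N ↑S : ℝ) := by exact_mod_cast hsubmod
        rw [hcard]
        linarith
  obtain ⟨U, hGU, hU⟩ := key G (Finset.Subset.refl _)
  have hrU : (G.card : ℝ) ≤ (mrank N ↑U : ℝ) := by
    exact_mod_cast card_le_mrank (by exact_mod_cast Finset.coe_subset.2 hGU) hG
  have hsum : ∑ a ∈ U, z a ≤ ∑ e : α, z e :=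
    Finset.sum_le_sum_of_subset_of_nonneg (Finset.subset_univ U)
      (fun i _ _ => hz0 i)
  linarith
end

section
/- Let M be a matroid on a finite ground set E with rank function r, let x : E → ℝ be a point of the matroid polytope P(M), and let G be an independent set of M such that for every e ∈ G there exists a set S ⊆ E with e ∈ S that is tight with respect to x (i.e. ∑_{a∈S} x_a = r(S)). Then ∑_{e∈E} x_e ≥ |G|. -/
open scoped BigOperators Classical

section aux

variable {α : Type*} [Fintype α] {M : Matroid α}

lemma mrank_set_nonempty (S : Set α) :
    {n : ℕ | ∃ I : Finset α, ↑I ⊆ S ∧ M.Indep ↑I ∧ I.card = n}.Nonempty :=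
  ⟨0, ∅, by simp [M.empty_indep]⟩

lemma mrank_set_bddAbove (S : Set α) :
    BddAbove {n : ℕ | ∃ I : Finset α, ↑I ⊆ S ∧ M.Indep ↑I ∧ I.card = n} := by
  refine ⟨Fintype.card α, fun n hn => ?_⟩
  obtain ⟨I, -, -, rfl⟩ := hn
  exact Finset.card_le_univ I

lemma le_mrank {I : Finset α} {S : Set α} (hsub : ↑I ⊆ S) (hind : M.Indep ↑I) :
    I.card ≤ mrank M S :=
  le_csSup (mrank_set_bddAbove S) ⟨I, hsub, hind, rfl⟩

lemma mrank_le {S : Set α} {n : ℕ}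
    (h : ∀ I : Finset α, ↑I ⊆ S → M.Indep ↑I → I.card ≤ n) : mrank M S ≤ n :=
  csSup_le (mrank_set_nonempty S) (fun m hm => by
    obtain ⟨I, h1, h2, rfl⟩ := hm; exact h I h1 h2)

lemma mrank_eq_of_basis_s4 (hE : M.E = Set.univ) {J S : Finset α}
    (hJ : M.IsBasis ↑J ↑S) : mrank M ↑S = J.card := by
  refine le_antisymm (mrank_le fun I hsub hind => ?_) (le_mrank hJ.subset hJ.indep)
  obtain ⟨J', hJ', hIJ'⟩ := hind.subset_isBasis_of_subset hsub (by rw [hE]; exact Set.subset_univ _)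
  have h1 : (↑I : Set α).encard ≤ J'.encard := Set.encard_le_encard hIJ'
  rw [hJ'.encard_eq_encard hJ, Set.encard_coe_eq_coe_finsetCard,
    Set.encard_coe_eq_coe_finsetCard, Nat.cast_le] at h1
  exact h1

lemma exists_finset_basis (hE : M.E = Set.univ) (S : Finset α) {I : Finset α}
    (hsub : ↑I ⊆ (S : Set α)) (hind : M.Indep ↑I) :
    ∃ J : Finset α, M.IsBasis ↑J ↑S ∧ I ⊆ J := by
  obtain ⟨J, hJ, hIJ⟩ := hind.subset_isBasis_of_subset hsub (by rw [hE]; exact Set.subset_univ _)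
  have hfin : J.Finite := S.finite_toSet.subset hJ.subset
  refine ⟨hfin.toFinset, by rwa [hfin.coe_toFinset], fun a ha => ?_⟩
  rw [Set.Finite.mem_toFinset]
  exact hIJ ha

lemma mrank_submodular (hE : M.E = Set.univ) (A B : Finset α) :
    mrank M ↑(A ∪ B) + mrank M ↑(A ∩ B) ≤ mrank M ↑A + mrank M ↑B := by
  obtain ⟨I, hI, -⟩ := exists_finset_basis hE (A ∩ B) (I := ∅)
    (by simp) (by simp [M.empty_indep])
  obtain ⟨J, hJ, hIJ⟩ := exists_finset_basis hE (A ∪ B)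
    (hI.subset.trans (by rw [Finset.coe_inter, Finset.coe_union]; exact Set.inter_subset_left.trans Set.subset_union_left)) hI.indep
  have hJsub : J ⊆ A ∪ B := by
    have := hJ.subset; rwa [Finset.coe_subset] at this
  have hrU : mrank M ↑(A ∪ B) = J.card := mrank_eq_of_basis_s4 hE hJ
  have hrI : mrank M ↑(A ∩ B) = I.card := mrank_eq_of_basis_s4 hE hI
  have hA : (J ∩ A).card ≤ mrank M ↑A :=
    le_mrank (by rw [Finset.coe_inter]; exact Set.inter_subset_right)
      (hJ.indep.subset (by rw [Finset.coe_inter]; exact Set.inter_subset_left))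
  have hB : (J ∩ B).card ≤ mrank M ↑B :=
    le_mrank (by rw [Finset.coe_inter]; exact Set.inter_subset_right)
      (hJ.indep.subset (by rw [Finset.coe_inter]; exact Set.inter_subset_left))
  have hunion : (J ∩ A) ∪ (J ∩ B) = J := by
    rw [← Finset.inter_union_distrib_left]
    exact Finset.inter_eq_left.mpr hJsub
  have hinter : I ⊆ (J ∩ A) ∩ (J ∩ B) := by
    intro a ha
    have h1 : a ∈ A ∩ B := hI.subset ha
    simp only [Finset.mem_inter] at h1 ⊢
    exact ⟨⟨hIJ ha, h1.1⟩, hIJ ha, h1.2⟩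
  have hcard := Finset.card_union_add_card_inter (J ∩ A) (J ∩ B)
  rw [hunion] at hcard
  have hc2 := Finset.card_le_card hinter
  omega

end aux

theorem tight_cover_large_size
    {α : Type*} [Fintype α] (M : Matroid α) (hE : M.E = Set.univ)
    (x : α → ℝ) (hx0 : ∀ e, 0 ≤ x e)
    (hxP : ∀ S : Finset α, ∑ e ∈ S, x e ≤ (mrank M ↑S : ℝ))
    (G : Finset α) (hG : M.Indep ↑G)
    (hcov : ∀ e ∈ G, ∃ S : Finset α, e ∈ S ∧
      ∑ a ∈ S, x a = (mrank M ↑S : ℝ)) :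
    (G.card : ℝ) ≤ ∑ e : α, x e := by
  classical
  -- union of two tight sets is tight
  have tight_union : ∀ A B : Finset α,
      ∑ a ∈ A, x a = (mrank M ↑A : ℝ) → ∑ a ∈ B, x a = (mrank M ↑B : ℝ) →
      ∑ a ∈ A ∪ B, x a = (mrank M ↑(A ∪ B) : ℝ) := by
    intro A B hA hB
    have h1 := hxP (A ∪ B)
    have h2 := hxP (A ∩ B)
    have h3 : ∑ a ∈ A ∪ B, x a + ∑ a ∈ A ∩ B, x a = ∑ a ∈ A, x a + ∑ a ∈ B, x a :=
      Finset.sum_union_inter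
    have h4 := mrank_submodular (M := M) hE A B
    have h4' : (mrank M ↑(A ∪ B) : ℝ) + (mrank M ↑(A ∩ B) : ℝ)
        ≤ (mrank M ↑A : ℝ) + (mrank M ↑B : ℝ) := by exact_mod_cast h4
    linarith
  -- there is a tight set containing G
  have key : ∀ G' : Finset α, G' ⊆ G →
      ∃ T : Finset α, G' ⊆ T ∧ ∑ a ∈ T, x a = (mrank M ↑T : ℝ) := by
    intro G' hG'
    induction G' using Finset.induction_on with
    | empty =>
        refine ⟨∅, Finset.Subset.refl _, ?_⟩
        have : mrank M (↑(∅ : Finset α)) = 0 := by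
          refine Nat.le_zero.mp (mrank_le fun I hsub _ => ?_)
          simp only [Finset.coe_empty, Set.subset_empty_iff, Finset.coe_eq_empty] at hsub
          simp [hsub]
        simp only [Finset.coe_empty] at this ⊢
        simp [this]
    | @insert e s he ih =>
        obtain ⟨T, hT1, hT2⟩ := ih ((Finset.subset_insert e s).trans hG')
        obtain ⟨S, heS, hS⟩ := hcov e (hG' (Finset.mem_insert_self e s))
        refine ⟨T ∪ S, ?_, tight_union T S hT2 hS⟩
        intro a ha
        rcases Finset.mem_insert.mp ha with rfl | ha
        · exact Finset.mem_union_right _ heS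
        · exact Finset.mem_union_left _ (hT1 ha)
  obtain ⟨T, hGT, hTtight⟩ := key G (Finset.Subset.refl _)
  have h1 : (G.card : ℕ) ≤ mrank M ↑T :=
    le_mrank (by exact_mod_cast Finset.coe_subset.mpr hGT) hG
  have h2 : ∑ a ∈ T, x a ≤ ∑ e : α, x e :=
    Finset.sum_le_sum_of_subset_of_nonneg (Finset.subset_univ T)
      (fun i _ _ => hx0 i)
  have h1' : (G.card : ℝ) ≤ (mrank M ↑T : ℝ) := by exact_mod_cast h1
  linarith
end
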